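/- Let f be a Boolean network on n+1 variables whose last component does not depend on the last coordinate, and let g be the reduction of f obtained by eliminating the last variable. Define the edge relation E_g j i ↔ component i of g depends on coordinate j, and E_f j i ↔ component i of f depends on coordinate j. If there is a path from j to i in the wiring diagram of g (i.e., Relation.TransGen E_g j i), then there is a path from Fin.castSucc j to Fin.castSucc i in the wiring diagram of f (i.e., Relation.TransGen E_f (Fin.castSucc j) (Fin.castSucc i)). -/

import Mathlib

/-- Component `i` of `f` depends on coordinate `j`. -/
def NetDependsOn {m : ℕ} (f : (Fin m → Bool) → (Fin m → Bool)) (i j : Fin m) : Prop :=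
  ∃ (x : Fin m → Bool) (b : Bool), f (Function.update x j b) i ≠ f x i

lemma edge_of_reduction (n : ℕ)
    (f : (Fin (n+1) → Bool) → (Fin (n+1) → Bool))
    (hf : ∀ (x : Fin (n+1) → Bool) (b : Bool),
      f (Function.update x (Fin.last n) b) (Fin.last n) = f x (Fin.last n))
    (g : (Fin n → Bool) → (Fin n → Bool))
    (hg : ∀ (y : Fin n → Bool) (i : Fin n),
      g y i = f (Fin.snoc y (f (Fin.snoc y false) (Fin.last n))) (Fin.castSucc i))
    (j i : Fin n) (h : NetDependsOn g i j) :
    Relation.TransGen (fun a b : Fin (n+1) => NetDependsOn f b a)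
      (Fin.castSucc j) (Fin.castSucc i) := by
  obtain ⟨y, b, hne⟩ := h
  set y' := Function.update y j b with hy'def
  set c : Bool := f (Fin.snoc y false) (Fin.last n) with hc
  set c' : Bool := f (Fin.snoc y' false) (Fin.last n) with hc'
  rw [hg, hg] at hne
  have hsnoc : ∀ (z : Fin n → Bool) (d : Bool), (Fin.snoc z d : Fin (n+1) → Bool) =
      Function.update (Fin.snoc z false : Fin (n+1) → Bool) (Fin.last n) d := by
    intro z d; rw [Fin.update_snoc_last]
  have hupd : ∀ (d : Bool), (Fin.snoc y' d : Fin (n+1) → Bool) =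
      Function.update (Fin.snoc y d : Fin (n+1) → Bool) (Fin.castSucc j) b := by
    intro d; rw [hy'def, Fin.snoc_update]
  by_cases hcc : c' = c
  · apply Relation.TransGen.single
    refine ⟨Fin.snoc y c, b, ?_⟩
    rw [← hupd]
    rwa [← hc, ← hc', hcc] at hne
  · by_cases hd : f (Fin.snoc y c') (Fin.castSucc i) = f (Fin.snoc y c) (Fin.castSucc i)
    · apply Relation.TransGen.single
      refine ⟨Fin.snoc y c', b, ?_⟩
      rw [← hupd, hd]
      rwa [← hc, ← hc'] at hne
    · refine Relation.TransGen.tail (Relation.TransGen.single (b := Fin.last n) ?_) ?_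
      · refine ⟨Fin.snoc y false, b, ?_⟩
        rw [← hupd]
        rw [← hc, ← hc']
        exact hcc
      · refine ⟨Fin.snoc y c, c', ?_⟩
        rw [Fin.update_snoc_last]
        exact hd

/-- A path in the wiring diagram of the reduction `g` yields a path
in the wiring diagram of `f`. -/
theorem path_of_reduction (n : ℕ)
    (f : (Fin (n+1) → Bool) → (Fin (n+1) → Bool))
    (hf : ∀ (x : Fin (n+1) → Bool) (b : Bool),
      f (Function.update x (Fin.last n) b) (Fin.last n) = f x (Fin.last n))
    (g : (Fin n → Bool) → (Fin n → Bool))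
    (hg : ∀ (y : Fin n → Bool) (i : Fin n),
      g y i = f (Fin.snoc y (f (Fin.snoc y false) (Fin.last n))) (Fin.castSucc i))
    (j i : Fin n)
    (h : Relation.TransGen (fun a b : Fin n => NetDependsOn g b a) j i) :
    Relation.TransGen (fun a b : Fin (n+1) => NetDependsOn f b a)
      (Fin.castSucc j) (Fin.castSucc i) := by
  induction h with
  | single h => exact edge_of_reduction n f hf g hg _ _ h
  | tail _ h ih => exact ih.trans (edge_of_reduction n f hf g hg _ _ h)
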